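/- Let X be a set, f: X → X a map, and suppose for every n ≥ 1 the set Fix(fⁿ) of points fixed by fⁿ is finite, with cardinality F(n). Then for every n ≥ 1, ∑_{d | n} μ(d) · F(n/d) ≡ 0 (mod n), where μ is the Möbius function. -/

import Mathlib

/-- n divides the cardinality of a finite set of points of exact minimal period n
that is closed under f. -/
lemma dvd_card_exact_period {X : Type*} (f : X → X) (n : ℕ) (hn : 0 < n) :
    ∀ s : Finset X, (∀ x ∈ s, Function.minimalPeriod f x = n) →
      (∀ x ∈ s, f x ∈ s) → n ∣ s.card := by
  intro s
  induction s using Finset.strongInduction with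
  | _ s ih =>
    intro hmem hclosed
    rcases s.eq_empty_or_nonempty with rfl | ⟨x, hx⟩
    · simp
    · have hxper : f^[n] x = x := by
        rw [← hmem x hx]; exact Function.iterate_minimalPeriod
      have horb_mem : ∀ k, f^[k] x ∈ s := by
        intro k
        induction k with
        | zero => simpa using hx
        | succ k ihk => rw [Function.iterate_succ_apply']; exact hclosed _ ihk
      classical
      set O : Finset X := (Finset.range n).image (fun k => f^[k] x) with hO
      have hOsub : O ⊆ s := by
        intro y hy
        simp only [hO, Finset.mem_image, Finset.mem_range] at hy
        obtain ⟨k, _, rfl⟩ := hy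
        exact horb_mem k
      have hOcard : O.card = n := by
        rw [hO, Finset.card_image_of_injOn, Finset.card_range]
        intro a ha b hb hab
        simp only [Finset.coe_range, Set.mem_Iio] at ha hb
        exact Function.iterate_injOn_Iio_minimalPeriod
          (by rw [hmem x hx]; exact ha) (by rw [hmem x hx]; exact hb) hab
      have hxO : x ∈ O := by
        simp only [hO, Finset.mem_image, Finset.mem_range]
        exact ⟨0, hn, rfl⟩
      set t := s \ O with ht
      have htsub : t ⊂ s := by
        refine Finset.ssubset_iff_of_subset (Finset.sdiff_subset) |>.mpr ⟨x, hx, ?_⟩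
        simp [ht, hxO]
      have htclosed : ∀ y ∈ t, f y ∈ t := by
        intro y hy
        rw [ht, Finset.mem_sdiff] at hy ⊢
        refine ⟨hclosed _ hy.1, fun hfy => hy.2 ?_⟩
        simp only [hO, Finset.mem_image, Finset.mem_range] at hfy ⊢
        obtain ⟨k, hk, hfyk⟩ := hfy
        have hyper : f^[n] y = y := by
          rw [← hmem y hy.1]; exact Function.iterate_minimalPeriod
        have hy' : y = f^[(n - 1 + k) % n] x := by
          have h1 : f^[n - 1] (f y) = y := by
            rw [← Function.iterate_succ_apply, Nat.succ_eq_add_one,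
              Nat.sub_add_cancel hn, hyper]
          have h2 : f^[n - 1 + k] x = y := by
            rw [Function.iterate_add_apply, hfyk, h1]
          rw [← h2]
          have h3 := @Function.iterate_mod_minimalPeriod_eq X f x (n - 1 + k)
          rw [hmem x hx] at h3
          exact h3.symm
        exact ⟨(n - 1 + k) % n, Nat.mod_lt _ hn, hy'.symm⟩
      have hcard : s.card = t.card + n := by
        rw [ht, Finset.card_sdiff_of_subset hOsub, hOcard,
          Nat.sub_add_cancel (hOcard ▸ Finset.card_le_card hOsub)]
      rw [hcard]
      exact Nat.dvd_add (ih t htsub (fun y hy => hmem y (Finset.sdiff_subset hy)) htclosed)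
        (dvd_refl n)

open ArithmeticFunction ArithmeticFunction.Moebius in
/-- Gauss congruences for fixed point counts of iterates of a map. -/
theorem gauss_congruence_fixed_points {X : Type*} (f : X → X)
    (hfin : ∀ n : ℕ, 1 ≤ n → {x : X | f^[n] x = x}.Finite) :
    ∀ n : ℕ, 1 ≤ n →
      (n : ℤ) ∣ ∑ d ∈ n.divisors, μ d * ({x : X | f^[n / d] x = x}.ncard : ℤ) := by
  classical
  intro n hn
  have hPfin : ∀ m : ℕ, 0 < m → {x : X | Function.minimalPeriod f x = m}.Finite := by
    intro m hm
    refine (hfin m hm).subset ?_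
    intro x hx
    simp only [Set.mem_setOf_eq] at hx ⊢
    rw [← hx]; exact Function.iterate_minimalPeriod
  set Q : ℕ → Finset X := fun m =>
    if h : 0 < m then (hPfin m h).toFinset else ∅ with hQdef
  have hQ : ∀ m : ℕ, 0 < m → ∀ x : X, x ∈ Q m ↔ Function.minimalPeriod f x = m := by
    intro m hm x
    simp [hQdef, dif_pos hm, Set.Finite.mem_toFinset]
  set F : ℕ → ℤ := fun k => ({x : X | f^[k] x = x}.ncard : ℤ) with hF
  -- partition identity
  have hFsum : ∀ k > 0, ∑ m ∈ k.divisors, ((Q m).card : ℤ) = F k := by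
    intro k hk
    have hsetF : (hfin k hk).toFinset = k.divisors.biUnion Q := by
      ext x
      simp only [Set.Finite.mem_toFinset, Set.mem_setOf_eq, Finset.mem_biUnion,
        Nat.mem_divisors]
      constructor
      · intro hx
        have hdvd : Function.minimalPeriod f x ∣ k :=
          Function.IsPeriodicPt.minimalPeriod_dvd hx
        have hpos : 0 < Function.minimalPeriod f x := by
          have : x ∈ Function.periodicPts f := Function.mk_mem_periodicPts hk hx
          exact Function.minimalPeriod_pos_of_mem_periodicPts this
        exact ⟨Function.minimalPeriod f x, ⟨hdvd, hk.ne'⟩,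
          (hQ _ hpos x).mpr rfl⟩
      · rintro ⟨m, ⟨hmd, -⟩, hxm⟩
        have hpos : 0 < m := Nat.pos_of_dvd_of_pos hmd hk
        have := (hQ m hpos x).mp hxm
        exact (Function.isPeriodicPt_iff_minimalPeriod_dvd).mpr (this ▸ hmd)
    have hdisj : ∀ a ∈ k.divisors, ∀ b ∈ k.divisors, a ≠ b →
        Disjoint (Q a) (Q b) := by
      intro a ha b hb hab
      refine Finset.disjoint_left.mpr fun x hxa hxb => hab ?_
      rw [← (hQ a (Nat.pos_of_mem_divisors ha) x).mp hxa,
        (hQ b (Nat.pos_of_mem_divisors hb) x).mp hxb]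
    have hcard : {x : X | f^[k] x = x}.ncard = ∑ m ∈ k.divisors, (Q m).card := by
      rw [Set.ncard_eq_toFinset_card _ (hfin k hk), hsetF, Finset.card_biUnion hdisj]
    simp only [hF]
    rw [hcard]
    push_cast
    rfl
  have hinv := (ArithmeticFunction.sum_eq_iff_sum_mul_moebius_eq
    (R := ℤ) (f := fun m => ((Q m).card : ℤ)) (g := F)).mp hFsum n hn
  have hgoal : ∑ d ∈ n.divisors, (μ d : ℤ) * ({x : X | f^[n / d] x = x}.ncard : ℤ)
      = ((Q n).card : ℤ) := by
    rw [← hinv, ← Nat.sum_divisorsAntidiagonal (fun d e => (μ d : ℤ) * F e)]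
    simp
  rw [hgoal]
  have hdvd : n ∣ (Q n).card := by
    refine dvd_card_exact_period f n hn (Q n) (fun x hx => (hQ n hn x).mp hx) ?_
    intro x hx
    have hx' := (hQ n hn x).mp hx
    have hper : x ∈ Function.periodicPts f := by
      rw [← Function.minimalPeriod_pos_iff_mem_periodicPts, hx']; exact hn
    rw [hQ n hn (f x), Function.minimalPeriod_apply hper, hx']
  exact_mod_cast hdvd
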